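/- Let G be a graph with no degree-choosable component of radius at most r, and let T be the (unique) depth-r BFS tree rooted at some vertex v. If u' is a vertex of T with deg_G(u') ≥ 3 and u is the parent of u' in T (with u' at depth at most r), then d(u) + d(u') ≥ min{deg_G(u), deg_G(u')}, where d(w) denotes the number of children of w in T. -/

import Mathlib

open SimpleGraph

def IsOddCycle {V : Type*} (G : SimpleGraph V) : Prop :=
  G.Connected ∧ (∀ v, (G.neighborSet v).ncard = 2) ∧ Odd (Nat.card V)

def TwoConnected {V : Type*} (G : SimpleGraph V) : Prop :=
  3 ≤ Nat.card V ∧ ∀ v : V, (G.induce {w : V | w ≠ v}).Connected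

def DegreeChoosable {V : Type*} (G : SimpleGraph V) : Prop :=
  ∀ L : V → Finset ℕ, (∀ v, (G.neighborSet v).ncard ≤ (L v).card) →
    ∃ c : V → ℕ, (∀ v, c v ∈ L v) ∧ ∀ u w, G.Adj u w → c u ≠ c w

def IsDCC {V : Type*} (G : SimpleGraph V) (S : Set V) : Prop :=
  TwoConnected (G.induce S) ∧ G.induce S ≠ ⊤ ∧ ¬ IsOddCycle (G.induce S)

def RadiusLE {V : Type*} (G : SimpleGraph V) (S : Set V) (r : ℕ) : Prop :=
  ∃ u : S, ∀ w : S, (G.induce S).dist u w ≤ r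

def NoSmallDCC {V : Type*} (G : SimpleGraph V) (r : ℕ) : Prop :=
  ∀ S : Set V, IsDCC G S → ¬ RadiusLE G S r

def gball {V : Type*} (G : SimpleGraph V) (v : V) (r : ℕ) : Set V :=
  {u | G.Reachable v u ∧ G.dist v u ≤ r}

noncomputable def childCount {V : Type*} (G : SimpleGraph V) (v u : V) : ℕ :=
  {w | G.Adj u w ∧ G.dist v w = G.dist v u + 1}.ncard


namespace BFS

variable {V : Type*} (G : SimpleGraph V)

/-- A chain: walk-like sequence allowed to stall. -/
def Chain (S : Set V) (x y : V) (n : ℕ) : Prop :=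
  ∃ g : ℕ → V, g 0 = x ∧ g n = y ∧ (∀ k ≤ n, g k ∈ S) ∧
    ∀ k < n, g k = g (k+1) ∨ G.Adj (g k) (g (k+1))

variable {G}

namespace Chain

lemma refl {S : Set V} {x : V} (hx : x ∈ S) : Chain G S x x 0 :=
  ⟨fun _ => x, rfl, rfl, fun _ _ => hx, fun k hk => absurd hk (Nat.not_lt_zero k)⟩

lemma mono {S S' : Set V} (hss : S ⊆ S') {x y : V} {n : ℕ} (h : Chain G S x y n) :
    Chain G S' x y n := by
  obtain ⟨g, h0, hn, hm, ha⟩ := h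
  exact ⟨g, h0, hn, fun k hk => hss (hm k hk), ha⟩

lemma rev {S : Set V} {x y : V} {n : ℕ} (h : Chain G S x y n) : Chain G S y x n := by
  obtain ⟨g, h0, hn, hm, ha⟩ := h
  refine ⟨fun k => g (n - k), by simpa using hn, by simpa using h0,
    fun k hk => hm _ (by omega), fun k hk => ?_⟩
  show g (n - k) = g (n - (k+1)) ∨ G.Adj (g (n - k)) (g (n - (k+1)))
  have h1 : n - k = (n - (k+1)) + 1 := by omega
  rcases ha (n - (k+1)) (by omega) with he | hadj
  · left; rw [h1, he]
  · right; rw [h1]; exact hadj.symm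

lemma comp {S : Set V} {x y z : V} {n n' : ℕ} (h1 : Chain G S x y n)
    (h2 : Chain G S y z n') : Chain G S x z (n + n') := by
  obtain ⟨g1, h10, h1n, h1m, h1a⟩ := h1
  obtain ⟨g2, h20, h2n, h2m, h2a⟩ := h2
  refine ⟨fun k => if k ≤ n then g1 k else g2 (k - n), by simp [h10], ?_, ?_, ?_⟩
  · show (if n + n' ≤ n then g1 (n + n') else g2 (n + n' - n)) = z
    by_cases hc : n' = 0
    · subst hc; simp only [Nat.add_zero, if_pos le_rfl, h1n, ← h20]
      rw [← h2n]
    · rw [if_neg (by omega), show n + n' - n = n' by omega]; exact h2n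
  · intro k hk
    show (if k ≤ n then g1 k else g2 (k - n)) ∈ S
    by_cases hc : k ≤ n
    · rw [if_pos hc]; exact h1m k hc
    · rw [if_neg hc]; exact h2m (k - n) (by omega)
  · intro k hk
    show (if k ≤ n then g1 k else g2 (k - n)) = (if k + 1 ≤ n then g1 (k+1) else g2 (k + 1 - n))
      ∨ G.Adj (if k ≤ n then g1 k else g2 (k - n)) (if k + 1 ≤ n then g1 (k+1) else g2 (k + 1 - n))
    by_cases hc : k + 1 ≤ n
    · rw [if_pos (by omega : k ≤ n), if_pos hc]; exact h1a k (by omega)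
    · by_cases hc2 : k ≤ n
      · have hkn : k = n := by omega
        rw [if_pos hc2, if_neg hc, hkn, h1n, show n + 1 - n = 1 by omega, ← h20]
        exact h2a 0 (by omega)
      · rw [if_neg hc2, if_neg hc, show k + 1 - n = (k - n) + 1 by omega]
        exact h2a (k - n) (by omega)

lemma stretch {S : Set V} {x y : V} {n n' : ℕ} (hnn : n ≤ n') (h : Chain G S x y n) :
    Chain G S x y n' := by
  obtain ⟨g, h0, hn, hm, ha⟩ := h
  refine ⟨fun k => g (min k n), by simpa using h0, ?_, fun k _ => hm _ (by omega), ?_⟩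
  · show g (min n' n) = y
    rw [min_eq_right hnn]; exact hn
  · intro k hk
    show g (min k n) = g (min (k+1) n) ∨ G.Adj (g (min k n)) (g (min (k+1) n))
    by_cases hc : k + 1 ≤ n
    · rw [min_eq_left (by omega), min_eq_left hc]; exact ha k (by omega)
    · by_cases hc2 : k ≤ n
      · rw [min_eq_left hc2, min_eq_right (by omega)]
        rcases Nat.eq_or_lt_of_le hc2 with he | hlt
        · left; rw [he]
        · omega
      · left; rw [min_eq_right (by omega), min_eq_right (by omega)]

lemma single {S : Set V} {x y : V} (hx : x ∈ S) (hy : y ∈ S) (hadj : G.Adj x y) :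
    Chain G S x y 1 := by
  refine ⟨fun k => if k = 0 then x else y, by simp, by simp, ?_, ?_⟩
  · intro k hk; by_cases h0 : k = 0 <;> simp [h0, hx, hy]
  · intro k hk; right; simp [show k = 0 by omega, hadj]

end Chain

private lemma walk_aux {S : Set V} (n : ℕ) (g : ℕ → V) (hm : ∀ k ≤ n, g k ∈ S)
    (ha : ∀ k < n, g k = g (k+1) ∨ G.Adj (g k) (g (k+1))) :
    ∃ w : (G.induce S).Walk ⟨g 0, hm 0 (Nat.zero_le n)⟩ ⟨g n, hm n le_rfl⟩, w.length ≤ n := by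
  induction n with
  | zero => exact ⟨Walk.nil, by simp⟩
  | succ n ih =>
    obtain ⟨w, hw⟩ := ih (fun k hk => hm k (by omega)) (fun k hk => ha k (by omega))
    rcases ha n (by omega) with he | hadj
    · have hEq : (⟨g n, hm n (by omega)⟩ : ↥S) = ⟨g (n+1), hm (n+1) le_rfl⟩ := Subtype.ext he
      exact ⟨w.copy rfl hEq, by simpa using Nat.le_succ_of_le hw⟩
    · refine ⟨w.concat ?_, by rw [Walk.length_concat]; omega⟩
      simpa using hadj

lemma Chain.walk {S : Set V} {x y : V} {n : ℕ} (h : Chain G S x y n) (hx : x ∈ S) (hy : y ∈ S) :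
    ∃ w : (G.induce S).Walk ⟨x, hx⟩ ⟨y, hy⟩, w.length ≤ n := by
  obtain ⟨g, h0, hn, hm, ha⟩ := h
  subst h0; subst hn
  exact walk_aux n g hm ha

lemma Chain.dist_le {S : Set V} {x y : V} {n : ℕ} (h : Chain G S x y n) (hx : x ∈ S)
    (hy : y ∈ S) : (G.induce S).dist ⟨x, hx⟩ ⟨y, hy⟩ ≤ n := by
  obtain ⟨w, hw⟩ := h.walk hx hy
  exact le_trans (SimpleGraph.dist_le w) hw

lemma Chain.reachable {S : Set V} {x y : V} {n : ℕ} (h : Chain G S x y n) (hx : x ∈ S)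
    (hy : y ∈ S) : (G.induce S).Reachable ⟨x, hx⟩ ⟨y, hy⟩ := by
  obtain ⟨w, _⟩ := h.walk hx hy
  exact ⟨w⟩

private lemma reach_del_aux {S : Set V} {T : Set ↥S} (n : ℕ) (g : ℕ → V)
    (hm : ∀ k ≤ n, ∃ h : g k ∈ S, (⟨g k, h⟩ : ↥S) ∈ T)
    (ha : ∀ k < n, g k = g (k+1) ∨ G.Adj (g k) (g (k+1))) :
    ((G.induce S).induce T).Reachable ⟨⟨g 0, (hm 0 (Nat.zero_le n)).1⟩, (hm 0 (Nat.zero_le n)).2⟩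
      ⟨⟨g n, (hm n le_rfl).1⟩, (hm n le_rfl).2⟩ := by
  induction n with
  | zero =>
    exact Reachable.refl _
  | succ n ih =>
    have hr := ih (fun k hk => hm k (by omega)) (fun k hk => ha k (by omega))
    rcases ha n (by omega) with he | hadj
    · have hEq : (⟨⟨g n, (hm n (by omega)).1⟩, (hm n (by omega)).2⟩ : ↥T)
          = ⟨⟨g (n+1), (hm (n+1) le_rfl).1⟩, (hm (n+1) le_rfl).2⟩ := by
        apply Subtype.ext; apply Subtype.ext; exact he
      exact hEq ▸ hr
    · refine hr.trans (Adj.reachable ?_)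
      simpa using hadj

lemma Chain.reachable_del {S : Set V} {w0 : ↥S} {x y : V} {n : ℕ}
    (h : Chain G (S \ {(w0 : V)}) x y n) (hx : x ∈ S) (hxw : x ≠ (w0 : V))
    (hy : y ∈ S) (hyw : y ≠ (w0 : V)) :
    ((G.induce S).induce {z : ↥S | z ≠ w0}).Reachable
      ⟨⟨x, hx⟩, fun hc => hxw (congrArg Subtype.val hc)⟩
      ⟨⟨y, hy⟩, fun hc => hyw (congrArg Subtype.val hc)⟩ := by
  obtain ⟨g, h0, hn, hm, ha⟩ := h
  subst h0; subst hn
  have hm' : ∀ k ≤ n, ∃ h : g k ∈ S, (⟨g k, h⟩ : ↥S) ∈ {z : ↥S | z ≠ w0} := by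
    intro k hk
    obtain ⟨h1, h2⟩ := hm k hk
    exact ⟨h1, fun hc => h2 (congrArg Subtype.val hc)⟩
  have := reach_del_aux n g hm' ha
  convert this using 2 <;> rfl



variable {V : Type*} {G : SimpleGraph V}

lemma dist_adj_le {v a b : V} (hr : G.Reachable v a) (hab : G.Adj a b) :
    G.dist v b ≤ G.dist v a + 1 := by
  obtain ⟨wk, hwk⟩ := hr.exists_walk_length_eq_dist
  refine le_trans (SimpleGraph.dist_le (wk.concat hab)) ?_
  rw [Walk.length_concat, hwk]

lemma reachable_of_dist_pos {v x : V} (h : 0 < G.dist v x) : G.Reachable v x := by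
  by_contra hc
  rw [SimpleGraph.dist_eq_zero_of_not_reachable hc] at h
  omega

lemma eq_of_dist_zero {v x : V} (hr : G.Reachable v x) (h : G.dist v x = 0) : v = x :=
  (hr.dist_eq_zero_iff).mp h

lemma exists_geo {v x : V} (hr : G.Reachable v x) {n : ℕ} (hd : G.dist v x = n) :
    ∃ p : ℕ → V, p 0 = v ∧ p n = x ∧ (∀ i, i < n → G.Adj (p i) (p (i+1))) ∧
      (∀ i, i ≤ n → G.Reachable v (p i)) ∧ ∀ i, i ≤ n → G.dist v (p i) = i := by
  obtain ⟨wk, hwk⟩ := hr.exists_walk_length_eq_dist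
  rw [hd] at hwk
  refine ⟨wk.getVert, wk.getVert_zero, by rw [← hwk]; exact wk.getVert_length, ?_, ?_, ?_⟩
  · intro i hi
    exact wk.adj_getVert_succ (by omega)
  · intro i hi
    induction i with
    | zero => rw [wk.getVert_zero]
    | succ k ih =>
      exact (ih (by omega)).trans (wk.adj_getVert_succ (by omega)).reachable
  · -- forward bound
    have hup : ∀ i, i ≤ n → G.dist v (wk.getVert i) ≤ i := by
      intro i hi
      induction i with
      | zero => rw [wk.getVert_zero]; simp
      | succ k ih =>
        have hre : G.Reachable v (wk.getVert k) := by
          clear ih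
          induction k with
          | zero => rw [wk.getVert_zero]
          | succ j ihj =>
            exact (ihj (by omega)).trans (wk.adj_getVert_succ (by omega)).reachable
        exact le_trans (dist_adj_le hre (wk.adj_getVert_succ (by omega))) (by omega)
    -- backward: dist from getVert i to x plus reachability
    have hdown : ∀ k i, i + k = n → G.Reachable (wk.getVert i) x ∧ G.dist (wk.getVert i) x ≤ k := by
      intro k
      induction k with
      | zero =>
        intro i hi
        have : wk.getVert i = x := by rw [show i = n by omega, ← hwk]; exact wk.getVert_length
        rw [this]; exact ⟨Reachable.refl x, by simp⟩
      | succ k ih =>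
        intro i hi
        obtain ⟨hre, hdl⟩ := ih (i+1) (by omega)
        obtain ⟨w2, hw2⟩ := hre.exists_walk_length_eq_dist
        have hadj := wk.adj_getVert_succ (show i < wk.length by omega)
        refine ⟨hadj.reachable.trans hre, ?_⟩
        refine le_trans (SimpleGraph.dist_le (Walk.cons hadj w2)) ?_
        rw [Walk.length_cons, hw2]; omega
    intro i hi
    have h1 := hup i hi
    obtain ⟨hre2, h2⟩ := hdown (n - i) i (by omega)
    -- n = dist v x ≤ dist v (p i) + dist (p i) x
    have hre1 : ∀ j, j ≤ n → G.Reachable v (wk.getVert j) := by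
      intro j hj
      induction j with
      | zero => rw [wk.getVert_zero]
      | succ j2 ihj =>
        exact (ihj (by omega)).trans (wk.adj_getVert_succ (by omega)).reachable
    obtain ⟨wa, hwa⟩ := (hre1 i hi).exists_walk_length_eq_dist
    obtain ⟨wb, hwb⟩ := hre2.exists_walk_length_eq_dist
    have htri : G.dist v x ≤ G.dist v (wk.getVert i) + G.dist (wk.getVert i) x := by
      refine le_trans (SimpleGraph.dist_le (wa.append wb)) ?_
      rw [Walk.length_append, hwa, hwb]
    omega



lemma path_chain {G : SimpleGraph V} {S : Set V} (h : ℕ → V) (N : ℕ) (hmem : ∀ s, s ≤ N → h s ∈ S)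
    (hstep : ∀ s, s < N → h s = h (s+1) ∨ G.Adj (h s) (h (s+1))) (s1 s2 : ℕ)
    (h1 : s1 ≤ N) (h2 : s2 ≤ N) : ∃ n, Chain G S (h s1) (h s2) n := by
  rcases le_total s1 s2 with hle | hle
  · refine ⟨s2 - s1, fun k => h (s1 + k), by simp, by show h (s1 + (s2 - s1)) = h s2; rw [show s1 + (s2-s1) = s2 by omega], ?_, ?_⟩
    · intro k hk; exact hmem _ (by omega)
    · intro k hk
      have := hstep (s1 + k) (by omega)
      rw [show s1 + k + 1 = s1 + (k+1) by omega] at this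
      exact this
  · obtain ⟨n, hc⟩ : ∃ n, Chain G S (h s2) (h s1) n := by
      refine ⟨s1 - s2, fun k => h (s2 + k), by simp, by show h (s2 + (s1 - s2)) = h s1; rw [show s2 + (s1-s2) = s1 by omega], ?_, ?_⟩
      · intro k hk; exact hmem _ (by omega)
      · intro k hk
        have := hstep (s2 + k) (by omega)
        rw [show s2 + k + 1 = s2 + (k+1) by omega] at this
        exact this
    exact ⟨n, hc.rev⟩


structure TT (G : SimpleGraph V) where
  p : ℕ → V
  q : ℕ → V
  m : ℕ
  a : ℕ
  b : ℕ
  hma : m < a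
  hmb : m < b
  hpq : p m = q m
  hpadj : ∀ i, m ≤ i → i < a → G.Adj (p i) (p (i+1))
  hqadj : ∀ i, m ≤ i → i < b → G.Adj (q i) (q (i+1))
  htop : G.Adj (p a) (q b)
  hpinj : ∀ i j, m ≤ i → i ≤ a → m ≤ j → j ≤ a → p i = p j → i = j
  hqinj : ∀ i j, m ≤ i → i ≤ b → m ≤ j → j ≤ b → q i = q j → i = j
  hcross : ∀ i j, m ≤ i → i ≤ a → m ≤ j → j ≤ b → p i = q j → i = m ∧ j = m

namespace TT
variable {G : SimpleGraph V} (c : TT G)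

def L : ℕ := (c.a - c.m) + (c.b - c.m) + 1

def f (i : ℕ) : V := if i ≤ c.a - c.m then c.p (c.m + i) else c.q (c.b + (c.a - c.m) + 1 - i)

def S : Set V := c.f '' Set.Iio c.L

lemma hL3 : 3 ≤ c.L := by
  have h1 := c.hma; have h2 := c.hmb; unfold L; omega

lemma f_p {i : ℕ} (hi : i ≤ c.a - c.m) : c.f i = c.p (c.m + i) := if_pos hi

lemma f_q {i : ℕ} (h1 : c.a - c.m < i) : c.f i = c.q (c.b + (c.a - c.m) + 1 - i) :=
  if_neg (by omega)

lemma fL : c.f c.L = c.f 0 := by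
  have h2 := c.hmb
  rw [c.f_q (by unfold L; omega), c.f_p (by omega)]
  rw [show c.b + (c.a - c.m) + 1 - c.L = c.m by unfold L; omega, show c.m + 0 = c.m by omega]
  exact c.hpq.symm

lemma fadj : ∀ i, i < c.L → G.Adj (c.f i) (c.f (i+1)) := by
  intro i hi
  have hL : c.L = (c.a - c.m) + (c.b - c.m) + 1 := rfl
  have h1 := c.hma; have h2 := c.hmb
  by_cases hc1 : i + 1 ≤ c.a - c.m
  · rw [c.f_p (by omega), c.f_p hc1, show c.m + (i+1) = (c.m + i) + 1 by omega]
    exact c.hpadj (c.m + i) (by omega) (by omega)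
  · by_cases hc2 : i ≤ c.a - c.m
    · rw [c.f_p hc2, c.f_q (by omega), show c.m + i = c.a by omega,
        show c.b + (c.a - c.m) + 1 - (i+1) = c.b by omega]
      exact c.htop
    · rw [c.f_q (by omega), c.f_q (by omega)]
      have hx : c.b + (c.a - c.m) + 1 - i = (c.b + (c.a - c.m) + 1 - (i+1)) + 1 := by omega
      rw [hx]
      exact (c.hqadj (c.b + (c.a - c.m) + 1 - (i+1)) (by omega) (by omega)).symm

lemma finj : ∀ i, i < c.L → ∀ j, j < c.L → c.f i = c.f j → i = j := by
  intro i hi j hj hij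
  have hL : c.L = (c.a - c.m) + (c.b - c.m) + 1 := rfl
  have h1 := c.hma; have h2 := c.hmb
  by_cases hc1 : i ≤ c.a - c.m <;> by_cases hc2 : j ≤ c.a - c.m
  · rw [c.f_p hc1, c.f_p hc2] at hij
    have := c.hpinj _ _ (by omega) (by omega) (by omega) (by omega) hij
    omega
  · rw [c.f_p hc1, c.f_q (by omega)] at hij
    have := c.hcross _ _ (by omega) (by omega) (by omega) (by omega) hij
    omega
  · rw [c.f_q (by omega), c.f_p hc2] at hij
    have := c.hcross _ _ (by omega) (by omega) (by omega) (by omega) hij.symm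
    omega
  · rw [c.f_q (by omega), c.f_q (by omega)] at hij
    have := c.hqinj _ _ (by omega) (by omega) (by omega) (by omega) hij
    omega

lemma fmem : ∀ i, i ≤ c.L → c.f i ∈ c.S := by
  intro i hi
  rcases Nat.eq_or_lt_of_le hi with he | hlt
  · rw [he, c.fL]; exact ⟨0, by have := c.hL3; simp only [Set.mem_Iio]; omega, rfl⟩
  · exact ⟨i, hlt, rfl⟩

lemma pmem : ∀ i, c.m ≤ i → i ≤ c.a → c.p i ∈ c.S := by
  intro i him hia
  have : c.f (i - c.m) = c.p i := by
    rw [c.f_p (by omega)]; congr 1; omega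
  rw [← this]
  exact c.fmem _ (by unfold L; omega)

lemma qmem : ∀ i, c.m ≤ i → i ≤ c.b → c.q i ∈ c.S := by
  intro i him hib
  have h1 := c.hma; have h2 := c.hmb
  have hL : c.L = (c.a - c.m) + (c.b - c.m) + 1 := rfl
  rcases Nat.eq_or_lt_of_le him with he | hlt
  · rw [← he, ← c.hpq]; exact c.pmem c.m le_rfl (le_of_lt c.hma)
  · have : c.f (c.L - (i - c.m)) = c.q i := by
      rw [c.f_q (by omega)]; congr 1; omega
    rw [← this]
    exact c.fmem _ (by omega)

lemma mem_elim {x : V} (hx : x ∈ c.S) :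
    (∃ i, c.m ≤ i ∧ i ≤ c.a ∧ x = c.p i) ∨ (∃ i, c.m ≤ i ∧ i ≤ c.b ∧ x = c.q i) := by
  obtain ⟨j, hj, rfl⟩ := hx
  simp only [Set.mem_Iio] at hj
  have hL : c.L = (c.a - c.m) + (c.b - c.m) + 1 := rfl
  have h1 := c.hma; have h2 := c.hmb
  by_cases hc : j ≤ c.a - c.m
  · exact Or.inl ⟨c.m + j, by omega, by omega, c.f_p hc⟩
  · exact Or.inr ⟨c.b + (c.a - c.m) + 1 - j, by omega, by omega, c.f_q (by omega)⟩

lemma card : Nat.card ↥c.S = c.L := by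
  rw [Nat.card_coe_set_eq]
  show (c.f '' Set.Iio c.L).ncard = c.L
  rw [Set.ncard_image_of_injOn, ← Finset.coe_range, Set.ncard_coe_finset, Finset.card_range]
  intro i hi j hj hij
  exact c.finj i hi j hj hij

lemma chain_fwd (i j : ℕ) (hij : i ≤ j) (hj : j ≤ c.L) :
    Chain G c.S (c.f i) (c.f j) (j - i) := by
  refine ⟨fun k => c.f (i + k), by simp, by show c.f (i + (j - i)) = c.f j; rw [show i + (j-i) = j by omega], ?_, ?_⟩
  · intro k hk; exact c.fmem _ (by omega)
  · intro k hk
    right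
    have := c.fadj (i + k) (by omega)
    rw [show i + k + 1 = i + (k+1) by omega] at this
    exact this

lemma chain_bwd (i j : ℕ) (hij : i ≤ j) (hj : j ≤ c.L) :
    Chain G c.S (c.f j) (c.f i) (c.L - (j - i)) := by
  have hL0 : 0 < c.L := by have := c.hL3; omega
  refine ⟨fun k => if j + k ≤ c.L then c.f (j + k) else c.f (j + k - c.L), by simp [hj], ?_, ?_, ?_⟩
  · show (if j + (c.L - (j-i)) ≤ c.L then c.f (j + (c.L - (j-i))) else c.f (j + (c.L - (j-i)) - c.L)) = c.f i
    by_cases hc : i = 0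
    · rw [if_pos (by omega), show j + (c.L - (j - i)) = c.L by omega, c.fL, hc]
    · rw [if_neg (by omega)]; congr 1; omega
  · intro k hk
    show (if j + k ≤ c.L then c.f (j+k) else c.f (j+k-c.L)) ∈ c.S
    by_cases hc : j + k ≤ c.L
    · rw [if_pos hc]; exact c.fmem _ hc
    · rw [if_neg hc]; exact c.fmem _ (by omega)
  · intro k hk
    show (if j + k ≤ c.L then c.f (j+k) else c.f (j+k-c.L))
        = (if j + (k+1) ≤ c.L then c.f (j+(k+1)) else c.f (j+(k+1)-c.L))
      ∨ G.Adj (if j + k ≤ c.L then c.f (j+k) else c.f (j+k-c.L))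
        (if j + (k+1) ≤ c.L then c.f (j+(k+1)) else c.f (j+(k+1)-c.L))
    right
    by_cases hc1 : j + (k+1) ≤ c.L
    · rw [if_pos (by omega), if_pos hc1, show j + (k+1) = (j+k)+1 by omega]
      exact c.fadj (j+k) (by omega)
    · by_cases hc2 : j + k ≤ c.L
      · have hjk : j + k = c.L := by omega
        rw [if_pos hc2, if_neg hc1, hjk, c.fL, show j + (k+1) - c.L = 1 by omega]
        exact c.fadj 0 hL0
      · rw [if_neg hc2, if_neg hc1, show j + (k+1) - c.L = (j + k - c.L) + 1 by omega]
        refine c.fadj _ (by omega)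

lemma chain_any (i j : ℕ) (hi : i ≤ c.L) (hj : j ≤ c.L) :
    ∃ n, n ≤ c.L / 2 ∧ Chain G c.S (c.f i) (c.f j) n := by
  rcases le_total i j with hle | hle
  · by_cases hc : j - i ≤ c.L / 2
    · exact ⟨j - i, hc, c.chain_fwd i j hle hj⟩
    · exact ⟨c.L - (j - i), by omega, (c.chain_bwd i j hle hj).rev⟩
  · by_cases hc : i - j ≤ c.L / 2
    · exact ⟨i - j, hc, (c.chain_fwd j i hle hi).rev⟩
    · exact ⟨c.L - (i - j), by omega, c.chain_bwd j i hle hi⟩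

lemma avoid (w x y : V) (hx : x ∈ c.S) (hy : y ∈ c.S) (hxw : x ≠ w) (hyw : y ≠ w) :
    ∃ n, Chain G (c.S \ {w}) x y n := by
  by_cases hw : w ∈ c.S
  · obtain ⟨k, hk, hfk⟩ := hw
    simp only [Set.mem_Iio] at hk
    obtain ⟨jx, hjx, hfx⟩ := hx
    obtain ⟨jy, hjy, hfy⟩ := hy
    simp only [Set.mem_Iio] at hjx hjy
    have hL0 : 0 < c.L := by have := c.hL3; omega
    have hL3 := c.hL3
    -- path around the cycle avoiding index k
    set h : ℕ → V := fun s => if k + 1 + s ≤ c.L then c.f (k + 1 + s) else c.f (k + 1 + s - c.L)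
      with hh
    have hval : ∀ s, s ≤ c.L - 2 → ∃ idx, idx < c.L ∧ idx ≠ k ∧ h s = c.f idx := by
      intro s hs
      by_cases hc : k + 1 + s ≤ c.L
      · by_cases hc2 : k + 1 + s = c.L
        · refine ⟨0, hL0, by omega, ?_⟩
          show (if k + 1 + s ≤ c.L then c.f (k + 1 + s) else c.f (k + 1 + s - c.L)) = c.f 0
          rw [if_pos hc, hc2, c.fL]
        · refine ⟨k + 1 + s, by omega, by omega, ?_⟩
          show (if k + 1 + s ≤ c.L then c.f (k + 1 + s) else c.f (k + 1 + s - c.L)) = c.f (k+1+s)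
          rw [if_pos hc]
      · refine ⟨k + 1 + s - c.L, by omega, by omega, ?_⟩
        show (if k + 1 + s ≤ c.L then c.f (k + 1 + s) else c.f (k + 1 + s - c.L)) = c.f (k+1+s-c.L)
        rw [if_neg hc]
    have hmem : ∀ s, s ≤ c.L - 2 → h s ∈ c.S \ {w} := by
      intro s hs
      obtain ⟨idx, hidx, hik, hv⟩ := hval s hs
      rw [hv]
      refine ⟨c.fmem _ (by omega), ?_⟩
      simp only [Set.mem_singleton_iff]
      intro hc
      exact hik (c.finj idx hidx k hk (hc.trans hfk.symm))
    have hstep : ∀ s, s < c.L - 2 → h s = h (s+1) ∨ G.Adj (h s) (h (s+1)) := by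
      intro s hs
      right
      show G.Adj (if k + 1 + s ≤ c.L then c.f (k + 1 + s) else c.f (k + 1 + s - c.L))
        (if k + 1 + (s+1) ≤ c.L then c.f (k + 1 + (s+1)) else c.f (k + 1 + (s+1) - c.L))
      by_cases hc1 : k + 1 + (s+1) ≤ c.L
      · rw [if_pos (by omega : k + 1 + s ≤ c.L), if_pos hc1,
          show k + 1 + (s+1) = (k+1+s)+1 by omega]
        exact c.fadj _ (by omega)
      · by_cases hc2 : k + 1 + s ≤ c.L
        · have heq : k + 1 + s = c.L := by omega
          rw [if_pos hc2, if_neg hc1, heq, c.fL, show k+1+(s+1) - c.L = 1 by omega]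
          simpa using c.fadj 0 hL0
        · rw [if_neg hc2, if_neg hc1, show k+1+(s+1) - c.L = (k+1+s-c.L)+1 by omega]
          exact c.fadj _ (by omega)
    -- positions of x and y on the path
    have hpos : ∀ j, j < c.L → c.f j ≠ w → ∃ s, s ≤ c.L - 2 ∧ h s = c.f j := by
      intro j hj hjw
      have hjk : j ≠ k := by
        intro hc; exact hjw (hc ▸ hfk)
      by_cases hc : j > k
      · refine ⟨j - k - 1, by omega, ?_⟩
        show (if k + 1 + (j-k-1) ≤ c.L then c.f (k + 1 + (j-k-1)) else c.f (k + 1 + (j-k-1) - c.L)) = c.f j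
        rw [if_pos (by omega : k + 1 + (j - k - 1) ≤ c.L)]
        congr 1; omega
      · refine ⟨c.L - 1 - k + j, by omega, ?_⟩
        show (if k + 1 + (c.L-1-k+j) ≤ c.L then c.f (k + 1 + (c.L-1-k+j)) else c.f (k + 1 + (c.L-1-k+j) - c.L)) = c.f j
        by_cases hj0 : j = 0
        · rw [if_pos (by omega : k + 1 + (c.L - 1 - k + j) ≤ c.L)]
          rw [show k + 1 + (c.L - 1 - k + j) = c.L by omega, c.fL, hj0]
        · rw [if_neg (by omega : ¬ (k + 1 + (c.L - 1 - k + j) ≤ c.L))]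
          congr 1; omega
    obtain ⟨sx, hsx, hvx⟩ := hpos jx hjx (hfx ▸ hxw)
    obtain ⟨sy, hsy, hvy⟩ := hpos jy hjy (hfy ▸ hyw)
    obtain ⟨n, hc⟩ := path_chain h (c.L - 2) hmem hstep sx sy hsx hsy
    rw [hvx, hvy, hfx, hfy] at hc
    exact ⟨n, hc⟩
  · have hsub : c.S ⊆ c.S \ {w} := by
      intro z hz
      exact ⟨hz, by simp only [Set.mem_singleton_iff]; intro hc; exact hw (hc ▸ hz)⟩
    obtain ⟨jx, hjx, hfx⟩ := hx
    obtain ⟨jy, hjy, hfy⟩ := hy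
    simp only [Set.mem_Iio] at hjx hjy
    obtain ⟨n, _, hc⟩ := c.chain_any jx jy (le_of_lt hjx) (le_of_lt hjy)
    rw [hfx, hfy] at hc
    exact ⟨n, hc.mono hsub⟩

end TT


section DCC
variable {G : SimpleGraph V}

lemma card3 [Fintype V] {S : Set V} {x y z : V} (hx : x ∈ S) (hy : y ∈ S) (hz : z ∈ S)
    (hxy : x ≠ y) (hxz : x ≠ z) (hyz : y ≠ z) : 3 ≤ Nat.card ↥S := by
  rw [Nat.card_coe_set_eq]
  have hsub : ({x, y, z} : Set V) ⊆ S := by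
    intro w hw
    rcases hw with rfl | rfl | rfl <;> assumption
  have h3 : ({x, y, z} : Set V).ncard = 3 := by
    rw [Set.ncard_insert_of_notMem (by simp [hxy, hxz]),
      Set.ncard_insert_of_notMem (by simp [hyz]), Set.ncard_singleton]
  rw [← h3]
  exact Set.ncard_le_ncard hsub S.toFinite

lemma twoConnected_of_chains [Fintype V] {S : Set V} (x y z : V) (hx : x ∈ S) (hy : y ∈ S)
    (hz : z ∈ S) (hxy : x ≠ y) (hxz : x ≠ z) (hyz : y ≠ z)
    (hch : ∀ w x' y' : V, x' ∈ S → y' ∈ S → x' ≠ w → y' ≠ w → ∃ n, Chain G (S \ {w}) x' y' n) :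
    TwoConnected (G.induce S) := by
  refine ⟨card3 hx hy hz hxy hxz hyz, ?_⟩
  intro w0
  rw [connected_iff]
  constructor
  · rintro ⟨⟨xa, hxa⟩, hA⟩ ⟨⟨xb, hxb⟩, hB⟩
    have hane : xa ≠ (w0 : V) := fun hc => hA (Subtype.ext hc)
    have hbne : xb ≠ (w0 : V) := fun hc => hB (Subtype.ext hc)
    obtain ⟨n, hc⟩ := hch (↑w0) xa xb hxa hxb hane hbne
    exact hc.reachable_del hxa hane hxb hbne
  · -- nonempty
    by_cases hc : x = ↑w0
    · exact ⟨⟨⟨y, hy⟩, fun hcy => hxy (by rw [hc, ← congrArg Subtype.val hcy])⟩⟩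
    · exact ⟨⟨⟨x, hx⟩, fun hcx => hc (congrArg Subtype.val hcx)⟩⟩

lemma radiusLE_of_chains {S : Set V} {x0 : V} (hx0 : x0 ∈ S) (r : ℕ)
    (hch : ∀ x ∈ S, ∃ n, n ≤ r ∧ Chain G S x0 x n) : RadiusLE G S r := by
  refine ⟨⟨x0, hx0⟩, ?_⟩
  rintro ⟨x, hxS⟩
  obtain ⟨n, hn, hc⟩ := hch x hxS
  exact le_trans (hc.dist_le hx0 hxS) hn

lemma induce_ne_top {S : Set V} {x y : V} (hx : x ∈ S) (hy : y ∈ S) (hxy : x ≠ y)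
    (hnadj : ¬ G.Adj x y) : G.induce S ≠ ⊤ := by
  intro hc
  have hadj : (G.induce S).Adj ⟨x, hx⟩ ⟨y, hy⟩ := by
    rw [hc]
    exact fun he => hxy (congrArg Subtype.val he)
  exact hnadj (by simpa using hadj)

lemma no_third [Fintype V] {S : Set V}
    (hdeg : ∀ z : ↥S, ((G.induce S).neighborSet z).ncard = 2)
    {cv n1 n2 q : V} (hcv : cv ∈ S) (h1 : n1 ∈ S) (h2 : n2 ∈ S) (hq : q ∈ S)
    (ha1 : G.Adj cv n1) (ha2 : G.Adj cv n2) (haq : G.Adj cv q)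
    (h12 : n1 ≠ n2) (h1q : n1 ≠ q) (h2q : n2 ≠ q) : False := by
  have hsub : ({⟨n1, h1⟩, ⟨n2, h2⟩, ⟨q, hq⟩} : Set ↥S) ⊆
      (G.induce S).neighborSet ⟨cv, hcv⟩ := by
    intro w hw
    rcases hw with rfl | rfl | rfl
    · simpa using ha1
    · simpa using ha2
    · simpa using haq
  have h3 : ({⟨n1, h1⟩, ⟨n2, h2⟩, ⟨q, hq⟩} : Set ↥S).ncard = 3 := by
    rw [Set.ncard_insert_of_notMem, Set.ncard_insert_of_notMem, Set.ncard_singleton]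
    · simp only [Set.mem_singleton_iff]
      exact fun hc => h2q (congrArg Subtype.val hc)
    · simp only [Set.mem_insert_iff, Set.mem_singleton_iff]
      rintro (hc | hc)
      · exact h12 (congrArg Subtype.val hc)
      · exact h1q (congrArg Subtype.val hc)
  have hle := Set.ncard_le_ncard hsub (Set.toFinite _)
  rw [h3, hdeg ⟨cv, hcv⟩] at hle
  omega

def TT.mk' (G : SimpleGraph V) (v : V) (p q : ℕ → V) (m a b : ℕ)
    (hma : m < a) (hmb : m < b) (hpq : p m = q m)
    (hpadj : ∀ i, m ≤ i → i < a → G.Adj (p i) (p (i+1)))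
    (hqadj : ∀ i, m ≤ i → i < b → G.Adj (q i) (q (i+1)))
    (htop : G.Adj (p a) (q b))
    (hplev : ∀ i, m ≤ i → i ≤ a → G.dist v (p i) = i)
    (hqlev : ∀ i, m ≤ i → i ≤ b → G.dist v (q i) = i)
    (hmax : ∀ i, m ≤ i → i ≤ a → i ≤ b → p i = q i → i = m) : TT G where
  p := p
  q := q
  m := m
  a := a
  b := b
  hma := hma
  hmb := hmb
  hpq := hpq
  hpadj := hpadj
  hqadj := hqadj
  htop := htop
  hpinj := fun i j h1 h2 h3 h4 he => by
    have := hplev i h1 h2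
    have := hplev j h3 h4
    rw [← hplev i h1 h2, ← hplev j h3 h4, he]
  hqinj := fun i j h1 h2 h3 h4 he => by
    rw [← hqlev i h1 h2, ← hqlev j h3 h4, he]
  hcross := fun i j h1 h2 h3 h4 he => by
    have hij : i = j := by rw [← hplev i h1 h2, ← hqlev j h3 h4, he]
    subst hij
    have := hmax i h1 h2 h4 he
    omega

lemma TT.forceOdd [Fintype V] {r : ℕ} (h : NoSmallDCC G r) (c : TT G)
    {z w : V} (hz : z ∈ c.S) (hw : w ∈ c.S) (hzw : z ≠ w) (hnadj : ¬ G.Adj z w)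
    (hrad : c.L / 2 ≤ r) : IsOddCycle (G.induce c.S) := by
  by_contra hodd
  have h012 : ∀ i j, i < c.L → j < c.L → i ≠ j → c.f i ≠ c.f j := by
    intro i j hi hj hij hc
    exact hij (c.finj i hi j hj hc)
  have hL := c.hL3
  refine h c.S ⟨?_, induce_ne_top hz hw hzw hnadj, hodd⟩ ?_
  · exact twoConnected_of_chains (c.f 0) (c.f 1) (c.f 2)
      (c.fmem 0 (by omega)) (c.fmem 1 (by omega)) (c.fmem 2 (by omega))
      (h012 0 1 (by omega) (by omega) (by omega))
      (h012 0 2 (by omega) (by omega) (by omega))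
      (h012 1 2 (by omega) (by omega) (by omega))
      (fun w' x' y' hx' hy' hxw hyw => c.avoid w' x' y' hx' hy' hxw hyw)
  · refine radiusLE_of_chains (c.fmem 0 (by omega)) r ?_
    intro x hx
    obtain ⟨j, hj, hfj⟩ := hx
    simp only [Set.mem_Iio] at hj
    obtain ⟨n, hn, hc⟩ := c.chain_any 0 j (by omega) (by omega)
    rw [hfj] at hc
    exact ⟨n, le_trans hn hrad, hc⟩

lemma parent_unique [Fintype V] {r : ℕ} (h : NoSmallDCC G r)
    {v w p1 p2 : V} {s : ℕ} (hs1 : 1 ≤ s) (hsr : s ≤ r)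
    (hw : G.dist v w = s) (ha1 : G.Adj p1 w) (ha2 : G.Adj p2 w)
    (hd1 : G.dist v p1 = s - 1) (hd2 : G.dist v p2 = s - 1) : p1 = p2 := by
  classical
  have hrw : G.Reachable v w := reachable_of_dist_pos (by omega)
  have hr1 : G.Reachable v p1 := hrw.trans ha1.symm.reachable
  have hr2 : G.Reachable v p2 := hrw.trans ha2.symm.reachable
  rcases Nat.eq_or_lt_of_le hs1 with hs | hs2
  · -- s = 1 : both parents are v
    rw [← (eq_of_dist_zero hr1 (by omega)), ← (eq_of_dist_zero hr2 (by omega))]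
  by_contra hne
  obtain ⟨P1, hP10, hP1e, hP1a, hP1r, hP1l⟩ := exists_geo hr1 hd1
  obtain ⟨P2, hP20, hP2e, hP2a, hP2r, hP2l⟩ := exists_geo hr2 hd2
  set m := Nat.findGreatest (fun i => P1 i = P2 i) (s-1) with hm
  have hm_le : m ≤ s - 1 := Nat.findGreatest_le _
  have hP : P1 m = P2 m := Nat.findGreatest_spec (P := fun i => P1 i = P2 i)
    (Nat.zero_le _) (by show P1 0 = P2 0; rw [hP10, hP20])
  have hgr : ∀ i, m < i → i ≤ s - 1 → P1 i ≠ P2 i := by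
    intro i h1 h2
    exact Nat.findGreatest_is_greatest h1 h2
  have hm2 : m ≤ s - 2 := by
    rcases Nat.eq_or_lt_of_le hm_le with he | hlt
    · exfalso
      apply hne
      have h' : P1 (s-1) = P2 (s-1) := by rw [← he]; exact hP
      rw [← hP1e, ← hP2e, h']
    · omega
  set pe : ℕ → V := fun i => if i ≤ s - 1 then P1 i else w with hpe
  have hpe_lo : ∀ i, i ≤ s - 1 → pe i = P1 i := fun i hi => if_pos hi
  have hpe_hi : pe s = w := if_neg (by omega)
  let c : TT G := TT.mk' G v pe P2 m s (s-1) (by omega) (by omega)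
    (by rw [hpe_lo m (by omega)]; exact hP)
    (by
      intro i h1 h2
      by_cases hc1 : i + 1 ≤ s - 1
      · rw [hpe_lo i (by omega), hpe_lo (i+1) hc1]
        exact hP1a i (by omega)
      · have hi : i = s - 1 := by omega
        rw [hpe_lo i (by omega), show i + 1 = s by omega, hpe_hi, hi, hP1e]
        exact ha1)
    (fun i h1 h2 => hP2a i h2)
    (by rw [hpe_hi, hP2e]; exact ha2.symm)
    (by
      intro i h1 h2
      by_cases hc1 : i ≤ s - 1
      · rw [hpe_lo i hc1]; exact hP1l i hc1
      · rw [show i = s by omega, hpe_hi, hw])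
    (fun i _ h2 => hP2l i h2)
    (by
      intro i h1 h2 h3 he
      rw [hpe_lo i h3] at he
      by_contra hc
      exact hgr i (by omega) h3 he)
  have hcp : c.p = pe := rfl
  have hcm : c.m = m := rfl
  have hca : c.a = s := rfl
  have hcb : c.b = s - 1 := rfl
  have hcL : c.L = 2 * (s - m) := by
    show (c.a - c.m) + (c.b - c.m) + 1 = 2 * (s - m)
    rw [hca, hcb, hcm]; omega
  have hzS : c.p m ∈ c.S := c.pmem m (by omega) (by omega)
  have hwS : c.p s ∈ c.S := c.pmem s (by omega) (by omega)
  rw [hcp, hpe_lo m (by omega)] at hzS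
  rw [hcp, hpe_hi] at hwS
  have hne_zw : P1 m ≠ w := by
    intro hc
    have := hP1l m (by omega)
    rw [hc, hw] at this
    omega
  have hnadjzw : ¬ G.Adj (P1 m) w := by
    intro hc
    have := dist_adj_le (hP1r m (by omega)) hc
    rw [hw, hP1l m (by omega)] at this
    omega
  have hoc := TT.forceOdd h c hzS hwS hne_zw hnadjzw (by rw [hcL]; omega)
  obtain ⟨k, hk⟩ := hoc.2.2
  rw [c.card, hcL] at hk
  omega

end DCC

section Counting
variable {G : SimpleGraph V}

lemma ne_of_dist_ne {v x1 x2 : V} {s1 s2 : ℕ} (h1 : G.dist v x1 = s1)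
    (h2 : G.dist v x2 = s2) (hs : s1 ≠ s2) : x1 ≠ x2 :=
  fun hc => hs (by rw [← h1, hc, h2])

lemma nbhd_partition [Fintype V] {v w : V} {s : ℕ} (hs : 1 ≤ s)
    (hr : G.Reachable v w) (hd : G.dist v w = s) :
    (G.neighborSet w).ncard =
      {x | G.Adj w x ∧ G.dist v x = s - 1}.ncard +
      ({x | G.Adj w x ∧ G.dist v x = s}.ncard +
       {x | G.Adj w x ∧ G.dist v x = s + 1}.ncard) := by
  have hsplit : G.neighborSet w =
      {x | G.Adj w x ∧ G.dist v x = s - 1} ∪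
      ({x | G.Adj w x ∧ G.dist v x = s} ∪ {x | G.Adj w x ∧ G.dist v x = s + 1}) := by
    ext x
    simp only [mem_neighborSet, Set.mem_union, Set.mem_setOf_eq]
    constructor
    · intro hax
      have h1 : G.dist v x ≤ s + 1 := by
        have := dist_adj_le hr hax
        omega
    
      have h2 : s ≤ G.dist v x + 1 := by
        have := dist_adj_le (hr.trans hax.reachable) hax.symm
        rw [hd] at this
        exact this
      have h3 : G.dist v x = s - 1 ∨ G.dist v x = s ∨ G.dist v x = s + 1 := by omega
      rcases h3 with h3 | h3 | h3
      · exact Or.inl ⟨hax, h3⟩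
      · exact Or.inr (Or.inl ⟨hax, h3⟩)
      · exact Or.inr (Or.inr ⟨hax, h3⟩)
    · rintro (⟨hax, _⟩ | ⟨hax, _⟩ | ⟨hax, _⟩) <;> exact hax
  rw [hsplit]
  rw [Set.ncard_union_eq ?d1 (Set.toFinite _) (Set.toFinite _),
    Set.ncard_union_eq ?d2 (Set.toFinite _) (Set.toFinite _)]
  case d1 =>
    rw [Set.disjoint_left]
    rintro x ⟨_, hx1⟩ hx2
    rcases hx2 with ⟨_, hx2⟩ | ⟨_, hx2⟩ <;> omega
  case d2 =>
    rw [Set.disjoint_left]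
    rintro x ⟨_, hx1⟩ ⟨_, hx2⟩
    omega

lemma unifiedD [Fintype V] {r : ℕ} (h : NoSmallDCC G r)
    {v cv q x0 : V} {s n0 : ℕ} (hs1 : 1 ≤ s)
    (hq : G.Adj cv q) (hqd : G.dist v q = s) (hqr : G.Reachable v q)
    (pg : ℕ → V) (hpgs : pg s = cv)
    (hpga : ∀ i, i < s → G.Adj (pg i) (pg (i+1)))
    (hpgr : ∀ i, i ≤ s → G.Reachable v (pg i))
    (hpgl : ∀ i, i ≤ s → G.dist v (pg i) = i)
    (Sy : Set V) (hqS : q ∉ Sy)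
    (hcvS : pg s ∈ Sy) (hpredS : pg (s-1) ∈ Sy)
    {n1 n2 : V} (hn1 : n1 ∈ Sy) (hn2 : n2 ∈ Sy)
    (ha1 : G.Adj cv n1) (ha2 : G.Adj cv n2) (h12 : n1 ≠ n2) (h1q : n1 ≠ q) (h2q : n2 ≠ q)
    (hx0 : x0 ∈ Sy)
    (hrady : ∀ x ∈ Sy, ∃ n, n ≤ r ∧ Chain G Sy x0 x n)
    (hn0 : Chain G Sy x0 cv n0) (hbound : n0 + s ≤ r)
    (havy : ∀ w x y' : V, x ∈ Sy → y' ∈ Sy → x ≠ w → y' ≠ w → ∃ n, Chain G (Sy \ {w}) x y' n)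
    (hpair : ∃ a b : V, a ∈ Sy ∧ b ∈ Sy ∧ a ≠ b ∧ ¬ G.Adj a b) : False := by
  classical
  obtain ⟨R, hR0, hRe, hRa, hRr, hRl⟩ := exists_geo hqr hqd
  set m := Nat.findGreatest (fun i => pg i = R i) s with hmdef
  have hm_le : m ≤ s := Nat.findGreatest_le _
  have hpg0 : pg 0 = v := (eq_of_dist_zero (hpgr 0 (by omega)) (hpgl 0 (by omega))).symm
  have hP : pg m = R m := Nat.findGreatest_spec (P := fun i => pg i = R i)
    (Nat.zero_le _) (by show pg 0 = R 0; rw [hpg0, hR0])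
  have hgr : ∀ i, m < i → i ≤ s → pg i ≠ R i := by
    intro i h1 h2
    exact Nat.findGreatest_is_greatest h1 h2
  have hms : m < s := by
    rcases Nat.eq_or_lt_of_le hm_le with he | hlt
    · exfalso
      have : pg s = R s := by rw [← he]; exact hP
      rw [hpgs, hRe] at this
      exact (G.ne_of_adj hq) this
    · exact hlt
  let d : TT G := TT.mk' G v pg R m s s hms hms hP
    (fun i _ h2 => hpga i h2) (fun i _ h2 => hRa i h2)
    (by rw [hpgs, hRe]; exact hq)
    (fun i _ h2 => hpgl i h2) (fun i _ h2 => hRl i h2)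
    (fun i h1 h2 _ he => by by_contra hc; exact hgr i (by omega) h2 he)
  have hdm : d.m = m := rfl
  have hda : d.a = s := rfl
  have hdb : d.b = s := rfl
  have hdp : d.p = pg := rfl
  have hdq : d.q = R := rfl
  have hdL : d.L = 2 * (s - m) + 1 := by
    show (d.a - d.m) + (d.b - d.m) + 1 = 2 * (s - m) + 1
    rw [hda, hdb, hdm]; omega
  set T := Sy ∪ d.S with hT
  have hsh1d : pg s ∈ d.S := by
    have := d.pmem s (by omega) (by omega)
    rwa [hdp] at this
  have hsh2d : pg (s-1) ∈ d.S := by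
    have := d.pmem (s-1) (by omega) (by omega)
    rwa [hdp] at this
  have hshne : pg s ≠ pg (s-1) :=
    ne_of_dist_ne (hpgl s le_rfl) (hpgl (s-1) (by omega)) (by omega)
  have hqdS : q ∈ d.S := by
    have := d.qmem s (by omega) (by omega)
    rwa [hdq, hRe] at this
  have havT : ∀ w x y' : V, x ∈ T → y' ∈ T → x ≠ w → y' ≠ w →
      ∃ n, Chain G (T \ {w}) x y' n := by
    intro w x y' hx hy' hxw hyw
    obtain ⟨sh, hshS, hshD, hshw⟩ : ∃ sh, sh ∈ Sy ∧ sh ∈ d.S ∧ sh ≠ w := by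
      by_cases hc : pg s = w
      · exact ⟨pg (s-1), hpredS, hsh2d, fun hcc => hshne (hc.trans hcc.symm)⟩
      · exact ⟨pg s, hcvS, hsh1d, hc⟩
    have hsub1 : Sy \ {w} ⊆ T \ {w} :=
      Set.diff_subset_diff_left Set.subset_union_left
    have hsub2 : d.S \ {w} ⊆ T \ {w} :=
      Set.diff_subset_diff_left Set.subset_union_right
    have hgo : ∀ z, z ∈ T → z ≠ w → ∃ n, Chain G (T \ {w}) z sh n := by
      intro z hz hzw
      rcases hz with hz | hz
      · obtain ⟨n, hc⟩ := havy w z sh hz hshS hzw hshw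
        exact ⟨n, hc.mono hsub1⟩
      · obtain ⟨n, hc⟩ := d.avoid w z sh hz hshD hzw hshw
        exact ⟨n, hc.mono hsub2⟩
    obtain ⟨na, hca⟩ := hgo x hx hxw
    obtain ⟨nb, hcb⟩ := hgo y' hy' hyw
    exact ⟨na + nb, hca.comp hcb.rev⟩
  have hcvT : cv ∈ T := Or.inl (hpgs ▸ hcvS)
  refine h T ⟨?_, ?_, ?_⟩ ?_
  · exact twoConnected_of_chains n1 n2 cv (Or.inl hn1) (Or.inl hn2) hcvT
      h12 (ha1.ne).symm (ha2.ne).symm havT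
  · obtain ⟨a, b, haS, hbS, hab, hnadj⟩ := hpair
    exact induce_ne_top (Or.inl haS) (Or.inl hbS) hab hnadj
  · rintro ⟨hconn, hdeg2, hoddc⟩
    exact no_third hdeg2 hcvT (Or.inl hn1) (Or.inl hn2) (Or.inr hqdS)
      ha1 ha2 hq h12 h1q h2q
  · refine radiusLE_of_chains (show x0 ∈ T from Or.inl hx0) r ?_
    intro x hx
    rcases hx with hx | hx
    · obtain ⟨n, hn, hc⟩ := hrady x hx
      exact ⟨n, hn, hc.mono Set.subset_union_left⟩
    · obtain ⟨j, hj, hfj⟩ := hx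
      simp only [Set.mem_Iio] at hj
      have hcvf : d.f (s - m) = cv := by
        rw [d.f_p (by rw [hda, hdm])]
        rw [hdp, hdm, show m + (s - m) = s by omega, hpgs]
      obtain ⟨n2', hn2', hc2⟩ := d.chain_any (s-m) j (by omega) (by omega)
      rw [hcvf, hfj] at hc2
      refine ⟨n0 + n2', by omega, ?_⟩
      exact (hn0.mono Set.subset_union_left).comp (hc2.mono Set.subset_union_right)

end Counting

end BFS

/-- BFS expansion lemma: with no DCC of radius at most r, for a vertex u' of
degree at least 3 at level t ≤ r with BFS-parent u, the numbers of BFS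
children satisfy d(u) + d(u') ≥ min(deg u, deg u'). -/
theorem stmt4 {V : Type*} [Fintype V] (G : SimpleGraph V) (r : ℕ)
    (h : NoSmallDCC G r) (v u u' : V) (t : ℕ) (ht1 : 1 ≤ t) (htr : t ≤ r)
    (hu' : G.dist v u' = t) (hadj : G.Adj u u') (hu : G.dist v u = t - 1)
    (hdeg : 3 ≤ (G.neighborSet u').ncard) :
    min (G.neighborSet u).ncard (G.neighborSet u').ncard ≤
      childCount G v u + childCount G v u' := by
  classical
  have hreach_u' : G.Reachable v u' := BFS.reachable_of_dist_pos (by omega)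
  have hreach_u : G.Reachable v u := hreach_u'.trans hadj.symm.reachable
  have hcc_u' : childCount G v u' = {x | G.Adj u' x ∧ G.dist v x = t + 1}.ncard := by
    unfold childCount; rw [hu']
  have hcc_u : childCount G v u = {x | G.Adj u x ∧ G.dist v x = t}.ncard := by
    unfold childCount; rw [hu, show t - 1 + 1 = t by omega]
  rcases Nat.lt_or_ge t 2 with ht2 | ht2
  · -- t = 1 : u = v and every neighbour of u is a child
    have hv : v = u := BFS.eq_of_dist_zero hreach_u (by omega)
    have hset : G.neighborSet u = {x | G.Adj u x ∧ G.dist v x = t} := by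
      ext x
      simp only [mem_neighborSet, Set.mem_setOf_eq]
      constructor
      · intro hax
        refine ⟨hax, ?_⟩
        have hle : G.dist v x ≤ t := by
          have := BFS.dist_adj_le hreach_u hax
          omega
        have hne : G.dist v x ≠ 0 := by
          intro hc
          have hvx : v = x := BFS.eq_of_dist_zero (hreach_u.trans hax.reachable) hc
          rw [← hvx, hv] at hax
          exact G.loopless.irrefl u hax
        omega
      · exact fun hx => hx.1
    have : (G.neighborSet u).ncard = childCount G v u := by rw [hset, hcc_u]
    have hmin := min_le_left (G.neighborSet u).ncard (G.neighborSet u').ncard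
    omega
  -- now t ≥ 2
  have hpart := BFS.nbhd_partition ht1 hreach_u' hu'
  have hA : {x | G.Adj u' x ∧ G.dist v x = t - 1} = {u} := by
    ext x
    simp only [Set.mem_setOf_eq, Set.mem_singleton_iff]
    constructor
    · rintro ⟨hax, hdx⟩
      exact BFS.parent_unique h ht1 htr hu' hax.symm hadj hdx hu
    · rintro rfl
      exact ⟨hadj.symm, hu⟩
  by_cases hB2 : ∀ x, G.Adj u' x → G.dist v x = t → G.Adj u x
  · -- CASE 1 : every horizontal neighbour of u' is a child of u
    have hsub : insert u' {x | G.Adj u' x ∧ G.dist v x = t} ⊆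
        {x | G.Adj u x ∧ G.dist v x = t} := by
      intro x hx
      rcases hx with rfl | ⟨hax, hdx⟩
      · exact ⟨hadj, hu'⟩
      · exact ⟨hB2 x hax hdx, hdx⟩
    have hnotmem : u' ∉ {x | G.Adj u' x ∧ G.dist v x = t} := fun hc => G.loopless.irrefl u' hc.1
    have hge := Set.ncard_le_ncard hsub (Set.toFinite _)
    rw [Set.ncard_insert_of_notMem hnotmem (Set.toFinite _)] at hge
    have e1 : (G.neighborSet u').ncard =
        1 + ({x | G.Adj u' x ∧ G.dist v x = t}.ncard + childCount G v u') := by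
      rw [hpart, hA, Set.ncard_singleton, hcc_u']
    have e2 : {x | G.Adj u' x ∧ G.dist v x = t}.ncard + 1 ≤ childCount G v u := by
      rw [hcc_u]; exact hge
    have hmin := min_le_right (G.neighborSet u).ncard (G.neighborSet u').ncard
    omega
  · -- CASE 2 : u' has a horizontal neighbour y that is not a child of u
    push_neg at hB2
    obtain ⟨y, hy_adj, hy_dist, hy_nadj⟩ := hB2
    have hreach_y : G.Reachable v y := hreach_u'.trans hy_adj.reachable
    obtain ⟨P, hP0, hPe, hPa, hPr, hPl⟩ := BFS.exists_geo hreach_u hu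
    obtain ⟨Q, hQ0, hQe, hQa, hQr, hQl⟩ := BFS.exists_geo hreach_y hy_dist
    set pe : ℕ → V := fun i => if i ≤ t - 1 then P i else u' with hpedef
    have hpe_lo : ∀ i, i ≤ t - 1 → pe i = P i := fun i hi => if_pos hi
    have hpe_hi : pe t = u' := if_neg (by omega)
    have hpe_adj : ∀ i, i < t → G.Adj (pe i) (pe (i+1)) := by
      intro i hi
      by_cases hc : i + 1 ≤ t - 1
      · rw [hpe_lo i (by omega), hpe_lo (i+1) hc]
        exact hPa i (by omega)
      · have hie : i = t - 1 := by omega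
        rw [hpe_lo i (by omega), show i + 1 = t by omega, hpe_hi, hie, hPe]
        exact hadj
    have hpe_lev : ∀ i, i ≤ t → G.dist v (pe i) = i := by
      intro i hi
      by_cases hc : i ≤ t - 1
      · rw [hpe_lo i hc]; exact hPl i hc
      · rw [show i = t by omega, hpe_hi, hu']
    have hpe_reach : ∀ i, i ≤ t → G.Reachable v (pe i) := by
      intro i hi
      by_cases hc : i ≤ t - 1
      · rw [hpe_lo i hc]; exact hPr i hc
      · rw [show i = t by omega, hpe_hi]; exact hreach_u'
    set m := Nat.findGreatest (fun i => pe i = Q i) t with hmdef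
    have hm_le : m ≤ t := Nat.findGreatest_le _
    have hPmQ : pe m = Q m := Nat.findGreatest_spec (P := fun i => pe i = Q i) (Nat.zero_le _)
      (by show pe 0 = Q 0; rw [hpe_lo 0 (by omega), hP0, hQ0])
    have hgrm : ∀ i, m < i → i ≤ t → pe i ≠ Q i := by
      intro i h1 h2
      exact Nat.findGreatest_is_greatest h1 h2
    have hm2 : m ≤ t - 2 := by
      by_contra hcon
      push_neg at hcon
      rcases Nat.eq_or_lt_of_le hm_le with he | hlt
      · have hsp : pe t = Q t := by rw [← he]; exact hPmQ
        rw [hpe_hi, hQe] at hsp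
        exact (G.ne_of_adj hy_adj) hsp
      · have hmt : m = t - 1 := by omega
        have hsp : pe (t-1) = Q (t-1) := by rw [← hmt]; exact hPmQ
        rw [hpe_lo (t-1) le_rfl, hPe] at hsp
        have hstep := hQa (t-1) (by omega)
        rw [← hsp, show t - 1 + 1 = t by omega, hQe] at hstep
        exact hy_nadj hstep
    let cy : BFS.TT G := BFS.TT.mk' G v pe Q m t t (by omega) (by omega) hPmQ
      (fun i _ h2 => hpe_adj i h2) (fun i _ h2 => hQa i h2)
      (by rw [hpe_hi, hQe]; exact hy_adj)
      (fun i _ h2 => hpe_lev i h2) (fun i _ h2 => hQl i h2)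
      (fun i h1 h2 h3 he => by by_contra hcc; exact hgrm i (by omega) h2 he)
    have hcym : cy.m = m := rfl
    have hcya : cy.a = t := rfl
    have hcyb : cy.b = t := rfl
    have hcyp : cy.p = pe := rfl
    have hcyq : cy.q = Q := rfl
    have hcyL : cy.L = 2 * (t - m) + 1 := by
      show (cy.a - cy.m) + (cy.b - cy.m) + 1 = 2 * (t - m) + 1
      rw [hcya, hcyb, hcym]; omega
    have hu'Sy : u' ∈ cy.S := by
      have := cy.pmem t (by omega) (by omega)
      rwa [hcyp, hpe_hi] at this
    have huSy : u ∈ cy.S := by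
      have := cy.pmem (t-1) (by omega) (by omega)
      rwa [hcyp, hpe_lo (t-1) le_rfl, hPe] at this
    have hySy : y ∈ cy.S := by
      have := cy.qmem t (by omega) (by omega)
      rwa [hcyq, hQe] at this
    have hPt2Sy : P (t-2) ∈ cy.S := by
      have := cy.pmem (t-2) (by omega) (by omega)
      rwa [hcyp, hpe_lo (t-2) (by omega)] at this
    have hzSy : P m ∈ cy.S := by
      have := cy.pmem m (by omega) (by omega)
      rwa [hcyp, hpe_lo m (by omega)] at this
    have hz_ne : P m ≠ u' := BFS.ne_of_dist_ne (hPl m (by omega)) hu' (by omega)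
    have hz_nadj : ¬ G.Adj (P m) u' := by
      intro hc
      have := BFS.dist_adj_le (hPr m (by omega)) hc
      rw [hu', hPl m (by omega)] at this
      omega
    have hodd := cy.forceOdd h hzSy hu'Sy hz_ne hz_nadj (by omega)
    have hdeg2 := hodd.2.1
    have hfu' : cy.f (t - m) = u' := by
      rw [cy.f_p (by rw [hcya, hcym])]
      rw [hcyp, hcym, show m + (t - m) = t by omega, hpe_hi]
    have hrady : ∀ x ∈ cy.S, ∃ n, n ≤ r ∧ BFS.Chain G cy.S u' x n := by
      intro x hx
      obtain ⟨j, hj, hfj⟩ := hx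
      simp only [Set.mem_Iio] at hj
      obtain ⟨n, hn, hc⟩ := cy.chain_any (t - m) j (by omega) (by omega)
      rw [hfu', hfj] at hc
      exact ⟨n, by omega, hc⟩
    have havy : ∀ w a b : V, a ∈ cy.S → b ∈ cy.S → a ≠ w → b ≠ w →
        ∃ n, BFS.Chain G (cy.S \ {w}) a b n :=
      fun w a b ha hb haw hbw => cy.avoid w a b ha hb haw hbw
    have hpairy : ∃ a b : V, a ∈ cy.S ∧ b ∈ cy.S ∧ a ≠ b ∧ ¬ G.Adj a b :=
      ⟨P m, u', hzSy, hu'Sy, hz_ne, hz_nadj⟩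
    have huy : u ≠ y := BFS.ne_of_dist_ne hu hy_dist (by omega)
    -- B = {y}
    have hB : {x | G.Adj u' x ∧ G.dist v x = t} = {y} := by
      ext x
      simp only [Set.mem_setOf_eq, Set.mem_singleton_iff]
      constructor
      · rintro ⟨hax, hdx⟩
        by_contra hxy
        have hux : u ≠ x := BFS.ne_of_dist_ne hu hdx (by omega)
        have hyx : y ≠ x := fun hc => hxy hc.symm
        by_cases hxS : x ∈ cy.S
        · exact BFS.no_third hdeg2 hu'Sy huSy hySy hxS hadj.symm hy_adj hax huy hux hyx
        · exact BFS.unifiedD h ht1 hax hdx (hreach_u'.trans hax.reachable)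
            pe hpe_hi hpe_adj hpe_reach hpe_lev cy.S hxS
            (by rw [hpe_hi]; exact hu'Sy)
            (by rw [hpe_lo (t-1) le_rfl, hPe]; exact huSy)
            huSy hySy hadj.symm hy_adj huy hux hyx
            hu'Sy hrady (BFS.Chain.refl hu'Sy) (by omega)
            havy hpairy
      · rintro rfl
        exact ⟨hy_adj, hy_dist⟩
    -- B_u = ∅
    have hBu : {x | G.Adj u x ∧ G.dist v x = t - 1} = ∅ := by
      ext x
      simp only [Set.mem_setOf_eq, Set.mem_empty_iff_false, iff_false, not_and]
      intro hax hdx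
      have hn1x : P (t-2) ≠ x := BFS.ne_of_dist_ne (hPl (t-2) (by omega)) hdx (by omega)
      have hn2x : u' ≠ x := BFS.ne_of_dist_ne hu' hdx (by omega)
      have h12' : P (t-2) ≠ u' := BFS.ne_of_dist_ne (hPl (t-2) (by omega)) hu' (by omega)
      have hadjP : G.Adj u (P (t-2)) := by
        have hstep := hPa (t-2) (by omega)
        rw [show t - 2 + 1 = t - 1 by omega, hPe] at hstep
        exact hstep.symm
      by_cases hxS : x ∈ cy.S
      · exact BFS.no_third hdeg2 huSy hPt2Sy hu'Sy hxS hadjP hadj hax h12' hn1x hn2x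
      · exact BFS.unifiedD h (show 1 ≤ t - 1 by omega) hax hdx (hreach_u.trans hax.reachable)
          P hPe hPa hPr hPl cy.S hxS
          (by rw [hPe]; exact huSy)
          (by rw [show t - 1 - 1 = t - 2 by omega]; exact hPt2Sy)
          hPt2Sy hu'Sy hadjP hadj h12' hn1x hn2x
          hu'Sy hrady (BFS.Chain.single hu'Sy huSy hadj.symm) (by omega)
          havy hpairy
    -- counting
    have hpart_u := BFS.nbhd_partition (show 1 ≤ t - 1 by omega) hreach_u hu
    rw [hBu, Set.ncard_empty] at hpart_u
    have hAu_le : {x | G.Adj u x ∧ G.dist v x = t - 1 - 1}.ncard ≤ 1 := by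
      rcases Set.eq_empty_or_nonempty {x | G.Adj u x ∧ G.dist v x = t - 1 - 1} with he | hne
      · rw [he]; simp
      · obtain ⟨x0, hx0⟩ := hne
        have hsub : {x | G.Adj u x ∧ G.dist v x = t - 1 - 1} ⊆ {x0} := by
          rintro x ⟨hax, hdx⟩
          simp only [Set.mem_singleton_iff]
          exact BFS.parent_unique h (show 1 ≤ t - 1 by omega) (by omega) hu
            hax.symm hx0.1.symm hdx hx0.2
        exact le_trans (Set.ncard_le_ncard hsub (Set.toFinite _)) (by simp)
    have e2a : {x | G.Adj u x ∧ G.dist v x = t - 1 + 1}.ncard = childCount G v u := by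
      rw [hcc_u, show t - 1 + 1 = t by omega]
    have e1 : (G.neighborSet u').ncard = 1 + (1 + childCount G v u') := by
      rw [hpart, hA, hB, Set.ncard_singleton, Set.ncard_singleton, hcc_u']
    have hmin := min_le_left (G.neighborSet u).ncard (G.neighborSet u').ncard
    omega
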